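/- Let R be a Poisson superalgebra with universal enveloping algebra (U(R), m, h). Then the map m ⊗̂ h + h ⊗̂ m : R ⊗̂ R → U(R) ⊗̂ U(R), defined by (m⊗̂h + h⊗̂m)(a⊗b) = m(a)⊗h(b) + h(a)⊗m(b), is an even Lie superalgebra homomorphism, where R ⊗̂ R carries the Poisson bracket {a⊗a', b⊗b'} = (−1)^{|a'||b|}({a,b}⊗a'b' + ab⊗{a',b'}) and U(R) ⊗̂ U(R) carries the supercommutator bracket of the super tensor product algebra. -/

import Mathlib

namespace PaperSuper

universe uB

open scoped TensorProduct

section Core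

variable (k : Type*) [CommRing k]

/-- The Koszul sign `(-1)^{ij}` associated to parities `i j : ZMod 2`. -/
def sgn (i j : ZMod 2) : k := (-1 : k) ^ (i.val * j.val)

variable (A : Type*) [Ring A] [Algebra k A]

/-- A `ZMod 2`-graded algebra is supercommutative if homogeneous elements commute
up to the Koszul sign. -/
def Supercommutative (𝒜 : ZMod 2 → Submodule k A) : Prop :=
  ∀ (i j : ZMod 2), ∀ a ∈ 𝒜 i, ∀ b ∈ 𝒜 j, a * b = sgn k i j • (b * a)

/-- A Lie superalgebra bracket on a graded module. -/
structure IsLieSuperBracket {L : Type*} [AddCommGroup L] [Module k L]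
    (ℒ : ZMod 2 → Submodule k L) (br : L →ₗ[k] L →ₗ[k] L) : Prop where
  mem : ∀ i j, ∀ a ∈ ℒ i, ∀ b ∈ ℒ j, br a b ∈ ℒ (i + j)
  antisymm : ∀ i j, ∀ a ∈ ℒ i, ∀ b ∈ ℒ j, br a b = -(sgn k i j • br b a)
  jacobi : ∀ i j l, ∀ a ∈ ℒ i, ∀ b ∈ ℒ j, ∀ c ∈ ℒ l,
      sgn k i l • br a (br b c) + sgn k i j • br b (br c a)
        + sgn k j l • br c (br a b) = 0

/-- A Poisson superalgebra bracket: a Lie superalgebra bracket satisfying the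
super Leibniz rule. -/
structure IsPoissonBracket (𝒜 : ZMod 2 → Submodule k A)
    (br : A →ₗ[k] A →ₗ[k] A) extends IsLieSuperBracket k 𝒜 br : Prop where
  leibniz : ∀ i j, ∀ a ∈ 𝒜 i, ∀ b ∈ 𝒜 j, ∀ c : A,
      br a (b * c) = sgn k i j • (b * br a c) + br a b * c

/-- `(A, 𝒜, br)` is a Poisson superalgebra. -/
structure IsPoissonSuperalgebra (𝒜 : ZMod 2 → Submodule k A)
    (br : A →ₗ[k] A →ₗ[k] A) : Prop where
  supercomm : Supercommutative k A 𝒜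
  bracket : IsPoissonBracket k A 𝒜 br

variable {B : Type*} [Ring B] [Algebra k B]

/-- Property P for a triple `(B, γ, δ)` relative to a Poisson superalgebra
`(A, 𝒜, br)`, where `B` is a superalgebra with grading `ℬ`. -/
structure PropP (𝒜 : ZMod 2 → Submodule k A) (br : A →ₗ[k] A →ₗ[k] A)
    (ℬ : ZMod 2 → Submodule k B) (γ : A →ₐ[k] B) (δ : A →ₗ[k] B) : Prop where
  γ_even : ∀ i, ∀ a ∈ 𝒜 i, γ a ∈ ℬ i
  δ_even : ∀ i, ∀ a ∈ 𝒜 i, δ a ∈ ℬ i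
  δ_lie : ∀ i j, ∀ a ∈ 𝒜 i, ∀ b ∈ 𝒜 j,
      δ (br a b) = δ a * δ b - sgn k i j • (δ b * δ a)
  bracket_eq : ∀ i j, ∀ a ∈ 𝒜 i, ∀ b ∈ 𝒜 j,
      γ (br a b) = δ a * γ b - sgn k i j • (γ b * δ a)
  δ_mul : ∀ i j, ∀ a ∈ 𝒜 i, ∀ b ∈ 𝒜 j,
      δ (a * b) = γ a * δ b + sgn k i j • (γ b * δ a)

/-- `(U, 𝒰, m, h)` is a universal enveloping algebra of the Poisson superalgebra
`(A, 𝒜, br)`: it satisfies property P and is universal among all graded triples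
satisfying property P. -/
def IsUEA (𝒜 : ZMod 2 → Submodule k A) (br : A →ₗ[k] A →ₗ[k] A)
    (U : Type*) [Ring U] [Algebra k U] (𝒰 : ZMod 2 → Submodule k U)
    (m : A →ₐ[k] U) (h : A →ₗ[k] U) : Prop :=
  PropP k A 𝒜 br 𝒰 m h ∧
  ∀ (B : Type uB) [Ring B] [Algebra k B] (ℬ : ZMod 2 → Submodule k B),
    GradedAlgebra ℬ → ∀ (γ : A →ₐ[k] B) (δ : A →ₗ[k] B),
    PropP k A 𝒜 br ℬ γ δ →
    ∃! φ : U →ₐ[k] B, φ.comp m = γ ∧ φ.toLinearMap ∘ₗ h = δ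

end Core
section TG

variable {k : Type*} [CommRing k] {A : Type*} [Ring A] [Algebra k A] {B : Type*} [Ring B] [Algebra k B]

/-- Tensor grading. -/
noncomputable def tensorGrading (𝒜 : ZMod 2 → Submodule k A) (ℬ : ZMod 2 → Submodule k B)
    (p : ZMod 2) : Submodule k (A ⊗[k] B) :=
  ⨆ i : ZMod 2, LinearMap.range (TensorProduct.map (𝒜 i).subtype (ℬ (p - i)).subtype)

end TG


section Aux

lemma zmod2_cases : ∀ i : ZMod 2, i = 0 ∨ i = 1 := by decide

variable (k : Type*) [CommRing k]

@[simp] lemma sgn_zero_left (j : ZMod 2) : sgn k 0 j = 1 := by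
  simp [sgn]

@[simp] lemma sgn_zero_right (i : ZMod 2) : sgn k i 0 = 1 := by
  simp [sgn]

@[simp] lemma sgn_one_one : sgn k 1 1 = -1 := by
  simp [sgn]
  norm_num [ZMod.val_one]

@[simp] lemma zmod2_one_add_one : (1 + 1 : ZMod 2) = 0 := rfl

lemma sgn_comm (i j : ZMod 2) : sgn k i j = sgn k j i := by
  simp [sgn, Nat.mul_comm]

lemma sgn_sq (i j : ZMod 2) : sgn k i j * sgn k i j = 1 := by
  rcases zmod2_cases i with rfl | rfl <;> rcases zmod2_cases j with rfl | rfl <;> simp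

end Aux


section CoreLemma

variable {k : Type*} [CommRing k]
  {A : Type*} [Ring A] [Algebra k A]
  {U : Type*} [Ring U] [Algebra k U]

set_option maxHeartbeats 1000000 in
lemma core_identity
    (𝒜 : ZMod 2 → Submodule k A) (br : A →ₗ[k] A →ₗ[k] A)
    (hsc : Supercommutative k A 𝒜)
    (hanti : ∀ i j, ∀ x ∈ 𝒜 i, ∀ y ∈ 𝒜 j, br x y = -(sgn k i j • br y x))
    (𝒰 : ZMod 2 → Submodule k U)
    (m : A →ₐ[k] U) (h : A →ₗ[k] U)
    (hpp : PropP k A 𝒜 br 𝒰 m h)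
    (brT : (A ⊗[k] A) →ₗ[k] (A ⊗[k] A) →ₗ[k] (A ⊗[k] A))
    (hbrT : ∀ (pa' pb : ZMod 2), ∀ a' ∈ 𝒜 pa', ∀ b ∈ 𝒜 pb, ∀ (a b' : A),
      brT (a ⊗ₜ[k] a') (b ⊗ₜ[k] b')
        = sgn k pa' pb • (br a b ⊗ₜ[k] (a' * b') + (a * b) ⊗ₜ[k] br a' b'))
    (mulU : (U ⊗[k] U) →ₗ[k] (U ⊗[k] U) →ₗ[k] (U ⊗[k] U))
    (hmulU : ∀ (pv pu' : ZMod 2), ∀ v ∈ 𝒰 pv, ∀ u' ∈ 𝒰 pu', ∀ (u v' : U),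
      mulU (u ⊗ₜ[k] v) (u' ⊗ₜ[k] v') = sgn k pv pu' • ((u * u') ⊗ₜ[k] (v * v')))
    {α α' β β' : ZMod 2} {a a' b b' : A}
    (ha : a ∈ 𝒜 α) (ha' : a' ∈ 𝒜 α') (hb : b ∈ 𝒜 β) (hb' : b' ∈ 𝒜 β') :
    (TensorProduct.map m.toLinearMap h + TensorProduct.map h m.toLinearMap)
        (brT (a ⊗ₜ[k] a') (b ⊗ₜ[k] b'))
      = mulU ((TensorProduct.map m.toLinearMap h + TensorProduct.map h m.toLinearMap) (a ⊗ₜ[k] a'))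
          ((TensorProduct.map m.toLinearMap h + TensorProduct.map h m.toLinearMap) (b ⊗ₜ[k] b'))
        - sgn k (α + α') (β + β') •
          mulU ((TensorProduct.map m.toLinearMap h + TensorProduct.map h m.toLinearMap) (b ⊗ₜ[k] b'))
            ((TensorProduct.map m.toLinearMap h + TensorProduct.map h m.toLinearMap) (a ⊗ₜ[k] a')) := by
  have hPhi : ∀ x y : A,
      (TensorProduct.map m.toLinearMap h + TensorProduct.map h m.toLinearMap) (x ⊗ₜ[k] y)
        = m x ⊗ₜ[k] h y + h x ⊗ₜ[k] m y := by
    intro x y; simp [TensorProduct.map_tmul]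
  -- memberships in 𝒰
  have hma : m a ∈ 𝒰 α := hpp.γ_even α a ha
  have hmb : m b ∈ 𝒰 β := hpp.γ_even β b hb
  have hma' : m a' ∈ 𝒰 α' := hpp.γ_even α' a' ha'
  have hmb' : m b' ∈ 𝒰 β' := hpp.γ_even β' b' hb'
  have hha : h a ∈ 𝒰 α := hpp.δ_even α a ha
  have hhb : h b ∈ 𝒰 β := hpp.δ_even β b hb
  have hha' : h a' ∈ 𝒰 α' := hpp.δ_even α' a' ha'
  have hhb' : h b' ∈ 𝒰 β' := hpp.δ_even β' b' hb'
  -- basic relations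
  have e1 : m (br a b) = h a * m b - sgn k α β • (m b * h a) :=
    hpp.bracket_eq α β a ha b hb
  have e1' : m (br a' b') = h a' * m b' - sgn k α' β' • (m b' * h a') :=
    hpp.bracket_eq α' β' a' ha' b' hb'
  have L1 : h (br a b) = h a * h b - sgn k α β • (h b * h a) :=
    hpp.δ_lie α β a ha b hb
  have L1' : h (br a' b') = h a' * h b' - sgn k α' β' • (h b' * h a') :=
    hpp.δ_lie α' β' a' ha' b' hb'
  have hab : h (a * b) = m a * h b + sgn k α β • (m b * h a) :=
    hpp.δ_mul α β a ha b hb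
  have ha'b' : h (a' * b') = m a' * h b' + sgn k α' β' • (m b' * h a') :=
    hpp.δ_mul α' β' a' ha' b' hb'
  -- supercommutativity of m-images
  have hmm : m b * m a = sgn k α β • (m a * m b) := by
    have := hsc β α b hb a ha
    have h2 : m (b * a) = m (sgn k β α • (a * b)) := by rw [this]
    rw [map_mul, map_smul, map_mul, sgn_comm k β α] at h2
    exact h2
  have hmm' : m b' * m a' = sgn k α' β' • (m a' * m b') := by
    have := hsc β' α' b' hb' a' ha'
    have h2 : m (b' * a') = m (sgn k β' α' • (a' * b')) := by rw [this]
    rw [map_mul, map_smul, map_mul, sgn_comm k β' α'] at h2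
    exact h2
  -- the star relation
  have e2 : m (br a b) = m a * h b - sgn k α β • (h b * m a) := by
    rw [hanti α β a ha b hb, map_neg, map_smul,
      hpp.bracket_eq β α b hb a ha, sgn_comm k β α]
    rw [smul_sub, smul_smul, sgn_sq, one_smul]
    abel
  have e2' : m (br a' b') = m a' * h b' - sgn k α' β' • (h b' * m a') := by
    rw [hanti α' β' a' ha' b' hb', map_neg, map_smul,
      hpp.bracket_eq β' α' b' hb' a' ha', sgn_comm k β' α']
    rw [smul_sub, smul_smul, sgn_sq, one_smul]
    abel
  have hstar : h b * m a
      = sgn k α β • (m a * h b) - sgn k α β • (h a * m b) + m b * h a := by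
    have h1 : sgn k α β • (h b * m a) = m a * h b - m (br a b) := by
      rw [e2]; abel
    have h3 : h b * m a = sgn k α β • (sgn k α β • (h b * m a)) := by
      rw [smul_smul, sgn_sq, one_smul]
    rw [h3, h1, e1, smul_sub, smul_sub, smul_smul, sgn_sq, one_smul]
    abel
  have hstar' : h b' * m a'
      = sgn k α' β' • (m a' * h b') - sgn k α' β' • (h a' * m b') + m b' * h a' := by
    have h1 : sgn k α' β' • (h b' * m a') = m a' * h b' - m (br a' b') := by
      rw [e2']; abel
    have h3 : h b' * m a' = sgn k α' β' • (sgn k α' β' • (h b' * m a')) := by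
      rw [smul_smul, sgn_sq, one_smul]
    rw [h3, h1, e1', smul_sub, smul_sub, smul_smul, sgn_sq, one_smul]
    abel
  -- expand both sides
  rw [hbrT α' β a' ha' b hb a b', map_smul, map_add, hPhi, hPhi,
    hPhi a a', hPhi b b', map_mul m a b, map_mul m a' b', hab, ha'b', e1, e1', L1, L1']
  simp only [map_add, LinearMap.add_apply]
  rw [hmulU α' β (h a') hha' (m b) hmb (m a) (h b'),
    hmulU α' β (h a') hha' (h b) hhb (m a) (m b'),
    hmulU α' β (m a') hma' (m b) hmb (h a) (h b'),
    hmulU α' β (m a') hma' (h b) hhb (h a) (m b'),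
    hmulU β' α (h b') hhb' (m a) hma (m b) (h a'),
    hmulU β' α (h b') hhb' (h a) hha (m b) (m a'),
    hmulU β' α (m b') hmb' (m a) hma (h b) (h a'),
    hmulU β' α (m b') hmb' (h a) hha (h b) (m a')]
  rw [hmm, hmm', hstar, hstar']
  rcases zmod2_cases α with rfl | rfl <;> rcases zmod2_cases α' with rfl | rfl <;>
    rcases zmod2_cases β with rfl | rfl <;> rcases zmod2_cases β' with rfl | rfl <;>
  · simp only [sgn_zero_left, sgn_zero_right, sgn_one_one, zmod2_one_add_one, one_smul, neg_smul, zero_add,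
      add_zero, smul_add, smul_sub, smul_smul, neg_neg, neg_mul, mul_neg, one_mul, mul_one,
      TensorProduct.tmul_add, TensorProduct.add_tmul, TensorProduct.tmul_sub,
      TensorProduct.sub_tmul, TensorProduct.tmul_smul, TensorProduct.smul_tmul',
      TensorProduct.tmul_neg, TensorProduct.neg_tmul, smul_neg,
      sub_smul, add_smul] <;>
    module

end CoreLemma


section TGInd

variable {k : Type*} [CommRing k] {A : Type*} [Ring A] [Algebra k A]

lemma tg_induction (𝒜 : ZMod 2 → Submodule k A) {p : ZMod 2}
    {P : A ⊗[k] A → Prop}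
    (h0 : P 0) (hadd : ∀ x y, P x → P y → P (x + y))
    (htm : ∀ (q : ZMod 2) (a a' : A), a ∈ 𝒜 q → a' ∈ 𝒜 (p - q) → P (a ⊗ₜ[k] a')) :
    ∀ t ∈ tensorGrading 𝒜 𝒜 p, P t := by
  intro t ht
  rw [tensorGrading] at ht
  refine Submodule.iSup_induction (motive := P)
    (fun q => LinearMap.range (TensorProduct.map (𝒜 q).subtype ((𝒜 (p - q)).subtype)))
    ht ?_ h0 hadd
  rintro q x ⟨y, rfl⟩
  induction y using TensorProduct.induction_on with
  | zero => simpa using h0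
  | tmul x y =>
    rw [TensorProduct.map_tmul]
    exact htm q x.1 y.1 x.2 y.2
  | add x y hx hy =>
    rw [map_add]
    exact hadd _ _ hx hy

lemma tg_mem (𝒜 : ZMod 2 → Submodule k A) {p q : ZMod 2} {a a' : A}
    (ha : a ∈ 𝒜 q) (ha' : a' ∈ 𝒜 (p - q)) : a ⊗ₜ[k] a' ∈ tensorGrading 𝒜 𝒜 p := by
  refine Submodule.mem_iSup_of_mem q ⟨(⟨a, ha⟩ : 𝒜 q) ⊗ₜ[k] (⟨a', ha'⟩ : 𝒜 (p - q)), ?_⟩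
  rw [TensorProduct.map_tmul]
  rfl

end TGInd

section Stmt13

variable {k : Type*} [Field k] [CharZero k]
  {A : Type*} [Ring A] [Algebra k A]
  {U : Type*} [Ring U] [Algebra k U]

/-- For the universal enveloping algebra `(U(R), m, h)` of a Poisson
superalgebra `R`, the map `m ⊗̂ h + h ⊗̂ m : R ⊗̂ R → U(R) ⊗̂ U(R)` is an even
Lie superalgebra homomorphism, where `R ⊗̂ R` carries the tensor Poisson bracket
and `U(R) ⊗̂ U(R)` the supercommutator bracket of the super tensor product. -/
theorem tensor_map_lie_hom
    (𝒜 : ZMod 2 → Submodule k A) [GradedAlgebra 𝒜]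
    (br : A →ₗ[k] A →ₗ[k] A) (hP : IsPoissonSuperalgebra k A 𝒜 br)
    (𝒰 : ZMod 2 → Submodule k U) [GradedAlgebra 𝒰]
    (m : A →ₐ[k] U) (h : A →ₗ[k] U)
    (hU : IsUEA k A 𝒜 br U 𝒰 m h)
    -- the Poisson bracket of `R ⊗̂ R`:
    (brT : (A ⊗[k] A) →ₗ[k] (A ⊗[k] A) →ₗ[k] (A ⊗[k] A))
    (hbrT : ∀ (pa' pb : ZMod 2), ∀ a' ∈ 𝒜 pa', ∀ b ∈ 𝒜 pb, ∀ (a b' : A),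
      brT (a ⊗ₜ[k] a') (b ⊗ₜ[k] b')
        = sgn k pa' pb • (br a b ⊗ₜ[k] (a' * b') + (a * b) ⊗ₜ[k] br a' b'))
    -- the multiplication of the super tensor product `U(R) ⊗̂ U(R)`:
    (mulU : (U ⊗[k] U) →ₗ[k] (U ⊗[k] U) →ₗ[k] (U ⊗[k] U))
    (hmulU : ∀ (pv pu' : ZMod 2), ∀ v ∈ 𝒰 pv, ∀ u' ∈ 𝒰 pu', ∀ (u v' : U),
      mulU (u ⊗ₜ[k] v) (u' ⊗ₜ[k] v') = sgn k pv pu' • ((u * u') ⊗ₜ[k] (v * v'))) :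
    (∀ p, ∀ t ∈ tensorGrading 𝒜 𝒜 p,
      (TensorProduct.map m.toLinearMap h + TensorProduct.map h m.toLinearMap) t
        ∈ tensorGrading 𝒰 𝒰 p) ∧
    (∀ (i j : ZMod 2), ∀ t ∈ tensorGrading 𝒜 𝒜 i, ∀ s ∈ tensorGrading 𝒜 𝒜 j,
      (TensorProduct.map m.toLinearMap h + TensorProduct.map h m.toLinearMap) (brT t s)
        = mulU ((TensorProduct.map m.toLinearMap h + TensorProduct.map h m.toLinearMap) t)
            ((TensorProduct.map m.toLinearMap h + TensorProduct.map h m.toLinearMap) s)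
          - sgn k i j •
            mulU ((TensorProduct.map m.toLinearMap h + TensorProduct.map h m.toLinearMap) s)
              ((TensorProduct.map m.toLinearMap h + TensorProduct.map h m.toLinearMap) t)) := by
  obtain ⟨hpp, -⟩ := hU
  set Φ := TensorProduct.map m.toLinearMap h + TensorProduct.map h m.toLinearMap with hΦdef
  constructor
  · intro p t ht
    refine tg_induction (P := fun t => Φ t ∈ tensorGrading 𝒰 𝒰 p) 𝒜 ?_ ?_ ?_ t ht
    · simp
    · intro x y hx hy
      rw [map_add]; exact add_mem hx hy
    · intro q a a' ha ha'
      have : Φ (a ⊗ₜ[k] a') = m a ⊗ₜ[k] h a' + h a ⊗ₜ[k] m a' := by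
        simp [hΦdef, TensorProduct.map_tmul]
      rw [this]
      exact add_mem
        (tg_mem 𝒰 (hpp.γ_even q a ha) (hpp.δ_even _ a' ha'))
        (tg_mem 𝒰 (hpp.δ_even q a ha) (hpp.γ_even _ a' ha'))
  · intro i j t ht s hs
    revert s
    have key : ∀ (q q' : ZMod 2) (a a' b b' : A), a ∈ 𝒜 q → a' ∈ 𝒜 (i - q) →
        b ∈ 𝒜 q' → b' ∈ 𝒜 (j - q') →
        Φ (brT (a ⊗ₜ[k] a') (b ⊗ₜ[k] b'))
          = mulU (Φ (a ⊗ₜ[k] a')) (Φ (b ⊗ₜ[k] b'))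
            - sgn k i j • mulU (Φ (b ⊗ₜ[k] b')) (Φ (a ⊗ₜ[k] a')) := by
      intro q q' a a' b b' ha ha' hb hb'
      have hi : q + (i - q) = i := by ring
      have hj : q' + (j - q') = j := by ring
      have := core_identity 𝒜 br hP.supercomm hP.bracket.antisymm 𝒰 m h hpp
        brT hbrT mulU hmulU ha ha' hb hb'
      rw [hi, hj] at this
      exact this
    refine tg_induction
      (P := fun t => ∀ s ∈ tensorGrading 𝒜 𝒜 j,
        Φ (brT t s) = mulU (Φ t) (Φ s) - sgn k i j • mulU (Φ s) (Φ t)) 𝒜 ?_ ?_ ?_ t ht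
    · intro s hs; simp
    · intro x y hx hy s hs
      have h1 := hx s hs
      have h2 := hy s hs
      simp only [map_add, LinearMap.add_apply] at h1 h2 ⊢
      rw [h1, h2]
      simp only [smul_add]
      abel
    · intro q a a' ha ha' s hs
      refine tg_induction
        (P := fun s => Φ (brT (a ⊗ₜ[k] a') s)
          = mulU (Φ (a ⊗ₜ[k] a')) (Φ s) - sgn k i j • mulU (Φ s) (Φ (a ⊗ₜ[k] a'))) 𝒜 ?_ ?_ ?_ s hs
      · simp
      · intro x y hx hy
        simp only [map_add, LinearMap.add_apply] at hx hy ⊢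
        rw [hx, hy]
        simp only [smul_add]
        abel
      · intro q' b b' hb hb'
        exact key q q' a a' b b' ha ha' hb hb' 

end Stmt13

end PaperSuper
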